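/- Let R be a finite index set and let (L_r)_{r∈R} be mutually independent nonnegative real-valued random variables on a common probability space with 0 ≤ L_r ≤ m_r·n_r almost surely, where n_r are natural numbers and m_r are constants with 0 < m_r ≤ d for a constant d > 0. Suppose E[∑_{r∈R} L_r] ≤ d and set Δ_E := ∑_{r∈R} n_r². Then for every real n ≥ 1, P( ∑_{r∈R} L_r ≥ (1 + √(2·(log n)·Δ_E))·d ) ≤ n^{−4}. -/

import Mathlib

open MeasureTheory ProbabilityTheory

open Real in

lemma hoeffding_aux (p : ℝ) (hp0 : 0 ≤ p) (hp1 : p ≤ 1) (u : ℝ) :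
    Real.log (1 - p + p * Real.exp u) ≤ p * u + u ^ 2 / 8 := by
  have hD : ∀ x : ℝ, 0 < 1 - p + p * Real.exp x := by
    intro x
    rcases lt_or_eq_of_le hp1 with h | h
    · nlinarith [mul_nonneg hp0 (Real.exp_pos x).le]
    · subst h; simpa using Real.exp_pos x
  set G : ℝ → ℝ := fun x => p + x / 4 - p * Real.exp x / (1 - p + p * Real.exp x) with hGdef
  set g : ℝ → ℝ := fun x => p * x + x ^ 2 / 8 - Real.log (1 - p + p * Real.exp x) with hgdef
  have hDderiv : ∀ x : ℝ, HasDerivAt (fun x => 1 - p + p * Real.exp x) (p * Real.exp x) x := by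
    intro x
    simpa using ((Real.hasDerivAt_exp x).const_mul p).const_add (1 - p)
  have hgderiv : ∀ x : ℝ, HasDerivAt g (G x) x := by
    intro x
    have h1 : HasDerivAt (fun x : ℝ => Real.log (1 - p + p * Real.exp x))
        (p * Real.exp x / (1 - p + p * Real.exp x)) x := (hDderiv x).log (hD x).ne'
    have h2 : HasDerivAt (fun x : ℝ => p * x + x ^ 2 / 8) (p + x * 2 / 8) x := by
      have := ((hasDerivAt_id x).const_mul p).fun_add
        (((hasDerivAt_id x).pow 2).div_const 8)
      simpa [mul_comm] using this
    have := h2.fun_sub h1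
    refine this.congr_deriv ?_
    simp [hGdef]; ring
  have hGderiv : ∀ x : ℝ, HasDerivAt G
      (1 / 4 - p * Real.exp x * (1 - p) / (1 - p + p * Real.exp x) ^ 2) x := by
    intro x
    have h1 : HasDerivAt (fun x : ℝ => p * Real.exp x / (1 - p + p * Real.exp x))
        ((p * Real.exp x * (1 - p + p * Real.exp x) - p * Real.exp x * (p * Real.exp x)) /
          (1 - p + p * Real.exp x) ^ 2) x :=
      ((Real.hasDerivAt_exp x).const_mul p).div (hDderiv x) (hD x).ne'
    have h2 : HasDerivAt (fun x : ℝ => p + x / 4) (1 / 4) x := by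
      simpa using ((hasDerivAt_id x).div_const 4).const_add p
    have := h2.fun_sub h1
    refine this.congr_deriv ?_
    have hx := (hD x).ne'
    field_simp
    ring
  have hGnonneg : ∀ x : ℝ, 0 ≤ 1 / 4 - p * Real.exp x * (1 - p) / (1 - p + p * Real.exp x) ^ 2 := by
    intro x
    rw [sub_nonneg, div_le_iff₀ (pow_pos (hD x) 2)]
    nlinarith [sq_nonneg (1 - p - p * Real.exp x)]
  have hGmono : Monotone G :=
    monotone_of_deriv_nonneg (fun x => (hGderiv x).differentiableAt)
      (fun x => by rw [(hGderiv x).deriv]; exact hGnonneg x)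
  have hG0 : G 0 = 0 := by
    simp [hGdef, Real.exp_zero]
  have hg0 : g 0 = 0 := by
    simp [hgdef, Real.exp_zero]
  have hgdiff : Differentiable ℝ g := fun x => (hgderiv x).differentiableAt
  have hgcont : Continuous g := hgdiff.continuous
  have key : 0 ≤ g u := by
    rcases le_total 0 u with h | h
    · have hmono : MonotoneOn g (Set.Ici (0:ℝ)) := by
        refine monotoneOn_of_deriv_nonneg (convex_Ici 0) hgcont.continuousOn
          (fun x _ => (hgderiv x).differentiableAt.differentiableWithinAt) ?_
        intro x hx
        rw [(hgderiv x).deriv]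
        rw [interior_Ici] at hx
        have := hGmono (le_of_lt hx)
        rw [hG0] at this
        exact this
      have := hmono (Set.self_mem_Ici) h h
      rwa [hg0] at this
    · have hanti : AntitoneOn g (Set.Iic (0:ℝ)) := by
        refine antitoneOn_of_deriv_nonpos (convex_Iic 0) hgcont.continuousOn
          (fun x _ => (hgderiv x).differentiableAt.differentiableWithinAt) ?_
        intro x hx
        rw [(hgderiv x).deriv]
        rw [interior_Iic] at hx
        have := hGmono (le_of_lt hx)
        rw [hG0] at this
        exact this
      have := hanti (Set.mem_Iic.mpr h) (Set.self_mem_Iic) h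
      rwa [hg0] at this
  have : 0 ≤ p * u + u ^ 2 / 8 - Real.log (1 - p + p * Real.exp u) := key
  linarith

open Real in

lemma mgf_le_hoeffding {Ω : Type*} [MeasurableSpace Ω] (μ : Measure Ω) [IsProbabilityMeasure μ]
    (X : Ω → ℝ) (a b t : ℝ) (hX : Measurable X) (hab : a ≤ b)
    (h : ∀ᵐ ω ∂μ, X ω ∈ Set.Icc a b) :
    mgf X μ t ≤ Real.exp (t * (∫ ω, X ω ∂μ) + t ^ 2 * (b - a) ^ 2 / 8) := by
  have hXint : Integrable X μ := by
    refine Integrable.mono' (integrable_const (max |a| |b|)) hX.aestronglyMeasurable ?_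
    filter_upwards [h] with ω hω
    rw [Real.norm_eq_abs]
    exact abs_le_max_abs_abs hω.1 hω.2
  rcases eq_or_lt_of_le hab with rfl | hlt
  · -- a = b : X = a a.e.
    have hXa : ∀ᵐ ω ∂μ, X ω = a := by
      filter_upwards [h] with ω hω
      exact le_antisymm hω.2 hω.1
    have h1 : mgf X μ t = Real.exp (t * a) := by
      rw [mgf]
      rw [integral_congr_ae (g := fun _ => Real.exp (t * a))
        (by filter_upwards [hXa] with ω hω; rw [hω])]
      simp
    have h2 : ∫ ω, X ω ∂μ = a := by
      rw [integral_congr_ae (g := fun _ => a) hXa]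
      simp
    rw [h1, h2]
    simp
  · set Ex := ∫ ω, X ω ∂μ with hEx
    have hba : (0:ℝ) < b - a := sub_pos.mpr hlt
    have haEx : a ≤ Ex := by
      have := integral_mono_ae (integrable_const a) hXint (by filter_upwards [h] with ω hω; exact hω.1)
      simpa using this
    have hExb : Ex ≤ b := by
      have := integral_mono_ae hXint (integrable_const b) (by filter_upwards [h] with ω hω; exact hω.2)
      simpa using this
    set p := (Ex - a) / (b - a) with hpdef
    have hp0 : 0 ≤ p := div_nonneg (by linarith) hba.le
    have hp1 : p ≤ 1 := by
      rw [hpdef, div_le_one hba]; linarith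
    set c1 := (Real.exp (t * b) - Real.exp (t * a)) / (b - a) with hc1
    set c0 := (b * Real.exp (t * a) - a * Real.exp (t * b)) / (b - a) with hc0
    -- pointwise convexity bound
    have hpt : ∀ᵐ ω ∂μ, Real.exp (t * X ω) ≤ c0 + X ω * c1 := by
      filter_upwards [h] with ω hω
      set x := X ω
      set lam := (b - x) / (b - a) with hlam
      have hl0 : 0 ≤ lam := div_nonneg (by linarith [hω.2]) hba.le
      have hm0 : 0 ≤ 1 - lam := by
        rw [hlam]; rw [sub_nonneg, div_le_one hba]; linarith [hω.1]
      have hsum : lam + (1 - lam) = 1 := by ring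
      have hconv := convexOn_exp.2 (Set.mem_univ (t * a)) (Set.mem_univ (t * b)) hl0 hm0 hsum
      have hxeq : lam • (t * a) + (1 - lam) • (t * b) = t * x := by
        simp only [smul_eq_mul, hlam]
        field_simp
        ring
      rw [hxeq] at hconv
      simp only [smul_eq_mul] at hconv
      calc Real.exp (t * x) ≤ lam * Real.exp (t * a) + (1 - lam) * Real.exp (t * b) := hconv
        _ = c0 + x * c1 := by
            simp only [hlam, hc0, hc1]
            field_simp
            ring
    -- integrability of exp (t * X)
    have hint : Integrable (fun ω => Real.exp (t * X ω)) μ := by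
      refine Integrable.mono' (integrable_const (Real.exp (max (t * a) (t * b))))
        ((hX.const_mul t).exp.aestronglyMeasurable) ?_
      filter_upwards [h] with ω hω
      rw [Real.norm_eq_abs, abs_of_pos (Real.exp_pos _), Real.exp_le_exp]
      rcases le_total 0 t with ht | ht
      · exact le_max_of_le_right (mul_le_mul_of_nonneg_left hω.2 ht)
      · exact le_max_of_le_left (by nlinarith [hω.1])
    have hRint : Integrable (fun ω => c0 + X ω * c1) μ :=
      (integrable_const c0).add (hXint.mul_const c1)
    have hmgf_le : mgf X μ t ≤ c0 + Ex * c1 := by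
      have := integral_mono_ae hint hRint hpt
      rw [mgf]
      refine this.trans_eq ?_
      rw [integral_add (integrable_const c0) (hXint.mul_const c1), integral_const,
        integral_mul_const]
      simp [hEx]
    -- rewrite c0 + Ex * c1 = exp(t*a) * (1 - p + p * exp u) with u = t*(b-a)
    set u := t * (b - a) with hu
    have hrew : c0 + Ex * c1 = Real.exp (t * a) * (1 - p + p * Real.exp u) := by
      have hexp : Real.exp (t * b) = Real.exp (t * a) * Real.exp u := by
        rw [← Real.exp_add, hu]; ring_nf
      rw [hc0, hc1, hpdef, hexp]
      field_simp
      ring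
    have hpos : (0:ℝ) < 1 - p + p * Real.exp u := by
      rcases lt_or_eq_of_le hp1 with h' | h'
      · nlinarith [mul_nonneg hp0 (Real.exp_pos u).le]
      · rw [← h']; nlinarith [Real.exp_pos u, mul_pos (lt_of_lt_of_le zero_lt_one (le_of_eq h'.symm) : (0:ℝ) < p) (Real.exp_pos u)]
    have hlog := hoeffding_aux p hp0 hp1 u
    have hfin : 1 - p + p * Real.exp u ≤ Real.exp (p * u + u ^ 2 / 8) := by
      rw [← Real.exp_log hpos]
      exact Real.exp_le_exp.mpr hlog
    calc mgf X μ t ≤ c0 + Ex * c1 := hmgf_le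
      _ = Real.exp (t * a) * (1 - p + p * Real.exp u) := hrew
      _ ≤ Real.exp (t * a) * Real.exp (p * u + u ^ 2 / 8) :=
          mul_le_mul_of_nonneg_left hfin (Real.exp_pos _).le
      _ = Real.exp (t * a + (p * u + u ^ 2 / 8)) := (Real.exp_add _ _).symm
      _ = Real.exp (t * Ex + t ^ 2 * (b - a) ^ 2 / 8) := by
          congr 1
          rw [hpdef, hu]
          field_simp
          ring

/-- Edge capacity violation bound: independent loads `L r ∈ [0, m r * n r]`, with
single virtual-edge demand `m r ≤ d` and `n r` virtual edges, expected load at most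
the capacity `d`.  With `Δ_E = ∑ (n r)²`, the probability of exceeding
`(1 + √(2 (log n) Δ_E)) d` is at most `n⁻⁴`. -/
theorem edge_capacity_violation {Ω : Type*} [MeasurableSpace Ω] (μ : Measure Ω)
    [IsProbabilityMeasure μ]
    {R : Type*} [Fintype R] (L : R → Ω → ℝ) (m : R → ℝ) (nE : R → ℕ) (d : ℝ)
    (hmeas : ∀ r, Measurable (L r))
    (hindep : iIndepFun L μ)
    (hbdd : ∀ r, ∀ᵐ ω ∂μ, 0 ≤ L r ω ∧ L r ω ≤ m r * (nE r : ℝ))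
    (hd : 0 < d)
    (hm : ∀ r, 0 < m r ∧ m r ≤ d)
    (hE : ∫ ω, ∑ r, L r ω ∂μ ≤ d) :
    ∀ n : ℝ, 1 ≤ n →
      μ {ω | (1 + Real.sqrt (2 * Real.log n * ∑ r, ((nE r : ℝ)) ^ 2)) * d ≤ ∑ r, L r ω}
        ≤ ENNReal.ofReal (n ^ (-4 : ℝ)) := by
  intro n hn
  classical
  set Δ : ℝ := ∑ r, ((nE r : ℝ)) ^ 2 with hΔdef
  have hΔ0 : 0 ≤ Δ := Finset.sum_nonneg fun r _ => sq_nonneg _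
  have hn0 : 0 < n := lt_of_lt_of_le one_pos hn
  by_cases hn1 : n = 1
  · subst hn1
    rw [Real.one_rpow, ENNReal.ofReal_one]
    exact prob_le_one
  have hln : 0 < Real.log n := Real.log_pos (lt_of_le_of_ne hn (Ne.symm hn1))
  by_cases hΔz : Δ = 0
  · -- all nE r = 0, so sum of loads ≤ 0 < threshold a.e.
    have hnE : ∀ r, (nE r : ℝ) = 0 := by
      intro r
      have := (Finset.sum_eq_zero_iff_of_nonneg (fun r _ => sq_nonneg ((nE r : ℝ)))).mp
        hΔz r (Finset.mem_univ r)
      exact sq_eq_zero_iff.mp this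
    have hthr : (1 + Real.sqrt (2 * Real.log n * Δ)) * d = d := by
      rw [hΔz, mul_zero, Real.sqrt_zero, add_zero, one_mul]
    have hae : ∀ᵐ ω ∂μ, ∑ r, L r ω < (1 + Real.sqrt (2 * Real.log n * Δ)) * d := by
      filter_upwards [MeasureTheory.ae_all_iff.mpr hbdd] with ω hω
      rw [hthr]
      have : ∑ r, L r ω ≤ 0 := Finset.sum_nonpos fun r _ => by
        have := (hω r).2
        rw [hnE r, mul_zero] at this
        exact this
      linarith
    have : μ {ω | (1 + Real.sqrt (2 * Real.log n * Δ)) * d ≤ ∑ r, L r ω} = 0 := by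
      rw [measure_eq_zero_iff_ae_notMem]
      filter_upwards [hae] with ω hω
      simp only [Set.mem_setOf_eq, not_le]
      exact hω
    rw [this]
    exact zero_le
  have hΔpos : 0 < Δ := lt_of_le_of_ne hΔ0 (Ne.symm hΔz)
  -- main case
  set s := Real.sqrt (2 * Real.log n * Δ) with hsdef
  have hs2 : s ^ 2 = 2 * Real.log n * Δ := Real.sq_sqrt (by positivity)
  have hspos : 0 < s := Real.sqrt_pos.mpr (by positivity)
  set t := 4 * s / (d * Δ) with htdef
  have ht : 0 < t := by positivity
  set ε := (1 + s) * d with hεdef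
  -- integrability
  have hLint : ∀ r, Integrable (L r) μ := by
    intro r
    refine Integrable.mono' (integrable_const (m r * (nE r : ℝ))) (hmeas r).aestronglyMeasurable ?_
    filter_upwards [hbdd r] with ω hω
    rw [Real.norm_eq_abs, abs_of_nonneg hω.1]
    exact hω.2
  have hint : ∀ r, Integrable (fun ω => Real.exp (t * L r ω)) μ := by
    intro r
    refine Integrable.mono' (integrable_const (Real.exp (t * (m r * (nE r : ℝ)))))
      (((hmeas r).const_mul t).exp.aestronglyMeasurable) ?_
    filter_upwards [hbdd r] with ω hω
    rw [Real.norm_eq_abs, abs_of_pos (Real.exp_pos _), Real.exp_le_exp]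
    exact mul_le_mul_of_nonneg_left hω.2 ht.le
  have hsum_int : Integrable (fun ω => Real.exp (t * (∑ r, L r) ω)) μ :=
    hindep.integrable_exp_mul_sum hmeas (fun r _ => hint r)
  -- Chernoff
  have hcher := measure_ge_le_exp_mul_mgf (X := ∑ r, L r) (μ := μ) ε ht.le hsum_int
  -- per-variable Hoeffding
  have hhoef : ∀ r, mgf (L r) μ t ≤
      Real.exp (t * (∫ ω, L r ω ∂μ) + t ^ 2 * (m r * (nE r : ℝ)) ^ 2 / 8) := by
    intro r
    have hb : (0:ℝ) ≤ m r * (nE r : ℝ) := mul_nonneg (hm r).1.le (Nat.cast_nonneg _)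
    have := mgf_le_hoeffding μ (L r) 0 (m r * (nE r : ℝ)) t (hmeas r) hb
      (by filter_upwards [hbdd r] with ω hω; exact ⟨hω.1, hω.2⟩)
    simpa using this
  have hmgf_sum : mgf (∑ r, L r) μ t = ∏ r, mgf (L r) μ t :=
    hindep.mgf_sum hmeas Finset.univ
  have hprod : (∏ r, mgf (L r) μ t) ≤
      Real.exp (∑ r, (t * (∫ ω, L r ω ∂μ) + t ^ 2 * (m r * (nE r : ℝ)) ^ 2 / 8)) := by
    rw [Real.exp_sum]
    exact Finset.prod_le_prod (fun r _ => mgf_nonneg) (fun r _ => hhoef r)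
  -- bound the exponent sum
  have hES : ∑ r, (∫ ω, L r ω ∂μ) ≤ d := by
    rw [← integral_finset_sum Finset.univ (fun r _ => hLint r)]
    exact hE
  have hC : ∑ r, (m r * (nE r : ℝ)) ^ 2 ≤ d ^ 2 * Δ := by
    rw [hΔdef, Finset.mul_sum]
    refine Finset.sum_le_sum fun r _ => ?_
    have h1 := (hm r).1
    have h2 := (hm r).2
    calc (m r * (nE r : ℝ)) ^ 2 = m r ^ 2 * (nE r : ℝ) ^ 2 := by ring
      _ ≤ d ^ 2 * (nE r : ℝ) ^ 2 :=
          mul_le_mul_of_nonneg_right (pow_le_pow_left₀ h1.le h2 2) (sq_nonneg _)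
  have hexp_sum : ∑ r, (t * (∫ ω, L r ω ∂μ) + t ^ 2 * (m r * (nE r : ℝ)) ^ 2 / 8)
      ≤ t * d + t ^ 2 * (d ^ 2 * Δ) / 8 := by
    rw [Finset.sum_add_distrib, ← Finset.mul_sum, ← Finset.sum_div, ← Finset.mul_sum]
    gcongr
  -- combine
  have hfinal : (μ {ω | ε ≤ (∑ r, L r) ω}).toReal ≤ n ^ (-4:ℝ) := by
    calc (μ {ω | ε ≤ (∑ r, L r) ω}).toReal
        ≤ Real.exp (-t * ε) * mgf (∑ r, L r) μ t := hcher
      _ ≤ Real.exp (-t * ε) * Real.exp (t * d + t ^ 2 * (d ^ 2 * Δ) / 8) := by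
          refine mul_le_mul_of_nonneg_left ?_ (Real.exp_pos _).le
          rw [hmgf_sum]
          exact hprod.trans (Real.exp_le_exp.mpr hexp_sum)
      _ = Real.exp (-t * ε + (t * d + t ^ 2 * (d ^ 2 * Δ) / 8)) := (Real.exp_add _ _).symm
      _ = Real.exp (-4 * Real.log n) := by
          congr 1
          have hd' : d ≠ 0 := hd.ne'
          have hΔ' : Δ ≠ 0 := hΔz
          have h1 : t * s * d = 4 * s ^ 2 / Δ := by
            rw [htdef]; field_simp
          have h2 : t ^ 2 * (d ^ 2 * Δ) / 8 = 2 * s ^ 2 / Δ := by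
            rw [htdef]; field_simp; ring
          calc -t * ε + (t * d + t ^ 2 * (d ^ 2 * Δ) / 8)
              = -(t * s * d) + t ^ 2 * (d ^ 2 * Δ) / 8 := by rw [hεdef]; ring
            _ = -(4 * s ^ 2 / Δ) + 2 * s ^ 2 / Δ := by rw [h1, h2]
            _ = -2 * s ^ 2 / Δ := by ring
            _ = -4 * Real.log n := by rw [hs2]; field_simp; ring
      _ = n ^ (-4:ℝ) := by
          rw [Real.rpow_def_of_pos hn0]
          ring_nf
  have hA : {ω | (1 + s) * d ≤ ∑ r, L r ω} = {ω | ε ≤ (∑ r, L r) ω} := by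
    ext ω; simp [hεdef, Finset.sum_apply]
  rw [hA, ← ENNReal.ofReal_toReal (measure_ne_top μ _)]
  exact ENNReal.ofReal_le_ofReal hfinal
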